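/- Let G satisfy the local doubling property with constant D_{τ,b}, and let A ∈ Aut(G) with κ_ρ/mod A ≤ τ. If a is an H¹_b atom (atom supported in a ball of radius at most b), then (1/D_{τ,b}) · (a ∘ A) is an H¹_{τb} atom. -/

import Mathlib

open MeasureTheory

/-- If `G` satisfies the local doubling inequality with constant
`D = D_{τ,b}` and `A ∈ Aut(G)` satisfies `κ_ρ / mod A ≤ τ`, then for every `H¹_b` atom `a`
the function `(1/D_{τ,b}) · (a ∘ A)` is an `H¹_{τb}` atom. -/
theorem rescaled_composition_is_atom
    {G : Type*} [MetricSpace G] [Group G] [IsTopologicalGroup G] [LocallyCompactSpace G]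
    [MeasurableSpace G] [BorelSpace G]
    (ν : Measure G) [ν.IsHaarMeasure]
    (hρ : ∀ g x y : G, dist (g * x) (g * y) = dist x y)
    (τ b D : ℝ) (hτ2 : 2 ≤ τ) (hb : 0 < b) (hD : 1 ≤ D)
    (hdoub : ∀ (y : G) (s : ℝ), 0 < s → s ≤ b →
      ν (Metric.ball y (τ * s)) ≤ ENNReal.ofReal D * ν (Metric.ball y s))
    (A : G ≃* G) (hA : Continuous A) (hA' : Continuous A.symm)
    (κ modA : ℝ) (hκ : 0 < κ) (hmodA : 0 < modA)
    (hmod : Measure.map A ν = ENNReal.ofReal modA • ν)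
    (hLip : LipschitzWith (Real.toNNReal (κ / modA)) A.symm)
    (hτ : κ / modA ≤ τ)
    (a : G → ℂ) (x : G) (r : ℝ) (hr : 0 < r) (hrb : r ≤ b)
    (hsupp : Function.support a ⊆ Metric.ball x r)
    (hbound : ∀ y, ‖a y‖ ≤ ((ν (Metric.ball x r)).toReal)⁻¹)
    (hint : ∫ y, a y ∂ν = 0) :
    ∃ (x' : G) (r' : ℝ), 0 < r' ∧ r' ≤ τ * b ∧
      Function.support (fun y => D⁻¹ • a (A y)) ⊆ Metric.ball x' r' ∧
      (∀ y, ‖D⁻¹ • a (A y)‖ ≤ ((ν (Metric.ball x' r')).toReal)⁻¹) ∧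
      ∫ y, D⁻¹ • a (A y) ∂ν = 0 := by
  have hD0 : (0:ℝ) < D := lt_of_lt_of_le one_pos hD
  have hτ0 : (0:ℝ) < τ := lt_of_lt_of_le two_pos hτ2
  have hκm : (0:ℝ) < κ / modA := div_pos hκ hmodA
  refine ⟨A.symm x, τ * r, mul_pos hτ0 hr, by nlinarith, ?_, ?_, ?_⟩
  · -- support
    intro y hy
    have hay : a (A y) ≠ 0 := by
      intro h; apply hy; simp [h]
    have hAy : (A y : G) ∈ Metric.ball x r := hsupp hay
    have hd : dist y (A.symm x) ≤ (κ / modA) * dist (A y) x := by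
      have := hLip.dist_le_mul (A y) x
      simpa [Real.coe_toNNReal _ hκm.le] using this
    have : dist y (A.symm x) < τ * r := by
      calc dist y (A.symm x) ≤ (κ / modA) * dist (A y) x := hd
        _ < (κ / modA) * r := by
            exact mul_lt_mul_of_pos_left (Metric.mem_ball.mp hAy) hκm
        _ ≤ τ * r := mul_le_mul_of_nonneg_right hτ hr.le
    exact Metric.mem_ball.mpr this
  · -- size bound
    intro y
    have hball_eq : ν (Metric.ball (A.symm x) r) = ν (Metric.ball x r) := by
      have key : ∀ z : G, Metric.ball z r = (fun w => z⁻¹ * w) ⁻¹' Metric.ball 1 r := by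
        intro z
        ext w
        simp only [Set.mem_preimage, Metric.mem_ball]
        constructor
        · intro h
          have := hρ z⁻¹ w z
          simp only [inv_mul_cancel] at this
          rw [← this] at h
          simpa [dist_comm] using h
        · intro h
          have := hρ z⁻¹ w z
          simp only [inv_mul_cancel] at this
          rw [this] at h
          simpa [dist_comm] using h
      rw [key (A.symm x), key x,
        measure_preimage_mul ν ((A.symm x)⁻¹) _, measure_preimage_mul ν x⁻¹ _]
    have hdoub' : ν (Metric.ball (A.symm x) (τ * r)) ≤
        ENNReal.ofReal D * ν (Metric.ball x r) := by
      rw [← hball_eq]; exact hdoub (A.symm x) r hr hrb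
    have hpos : 0 < ν (Metric.ball (A.symm x) (τ * r)) :=
      Metric.measure_ball_pos ν _ (mul_pos hτ0 hr)
    have hnorm : ‖D⁻¹ • a (A y)‖ = D⁻¹ * ‖a (A y)‖ := by
      rw [norm_smul, Real.norm_eq_abs, abs_of_nonneg (inv_nonneg.mpr hD0.le)]
    by_cases htop : ν (Metric.ball x r) = ⊤
    · have h0 : ((ν (Metric.ball x r)).toReal)⁻¹ = 0 := by simp [htop]
      have := hbound (A y)
      rw [h0] at this
      have ha0 : ‖a (A y)‖ = 0 := le_antisymm this (norm_nonneg _)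
      rw [hnorm, ha0, mul_zero]
      positivity
    · have hfin : ν (Metric.ball (A.symm x) (τ * r)) < ⊤ :=
        lt_of_le_of_lt hdoub' (by
          exact ENNReal.mul_lt_top ENNReal.ofReal_lt_top (lt_top_iff_ne_top.mpr htop))
      have hVpos : 0 < (ν (Metric.ball x r)).toReal :=
        ENNReal.toReal_pos (Metric.measure_ball_pos ν _ hr).ne' htop
      have hWpos : 0 < (ν (Metric.ball (A.symm x) (τ * r))).toReal :=
        ENNReal.toReal_pos hpos.ne' hfin.ne
      have hle : (ν (Metric.ball (A.symm x) (τ * r))).toReal ≤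
          D * (ν (Metric.ball x r)).toReal := by
        have := ENNReal.toReal_mono
          (by exact ENNReal.mul_ne_top ENNReal.ofReal_ne_top htop) hdoub'
        rwa [ENNReal.toReal_mul, ENNReal.toReal_ofReal hD0.le] at this
      calc ‖D⁻¹ • a (A y)‖ = D⁻¹ * ‖a (A y)‖ := hnorm
        _ ≤ D⁻¹ * ((ν (Metric.ball x r)).toReal)⁻¹ :=
            mul_le_mul_of_nonneg_left (hbound (A y)) (inv_nonneg.mpr hD0.le)
        _ = (D * (ν (Metric.ball x r)).toReal)⁻¹ := by rw [mul_inv]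
        _ ≤ ((ν (Metric.ball (A.symm x) (τ * r))).toReal)⁻¹ := by
            apply inv_anti₀ hWpos hle
  · -- integral
    let e : G ≃ᵐ G := (Homeomorph.mk A.toEquiv hA hA').toMeasurableEquiv
    have hmap : Measure.map (⇑e) ν = ENNReal.ofReal modA • ν := hmod
    have key : ∫ y, a (A y) ∂ν = 0 := by
      have h1 : ∫ y, a (e y) ∂ν = ∫ y, a y ∂(Measure.map (⇑e) ν) :=
        (integral_map_equiv e a).symm
      have h2 : ∫ y, a y ∂(ENNReal.ofReal modA • ν) =
          (ENNReal.ofReal modA).toReal • ∫ y, a y ∂ν := integral_smul_measure a _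
      have h3 : ∫ y, a (e y) ∂ν = (ENNReal.ofReal modA).toReal • ∫ y, a y ∂ν := by
        rw [h1, hmap, h2]
      simp [hint] at h3
      exact h3
    rw [integral_smul, key, smul_zero]
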